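/- Let $X$ be a real vector space, $C \subset X$ nonempty convex, $g_n : C \to \mathbb{R}$ a sequence of convex functions converging pointwise to $g_\infty$, and suppose $\hat{x} \in C$ minimizes $g_0$ over the feasible set $\{x \in C : g_n(x) \leq 0 \text{ for all } n \geq 1\}$ (and $\hat{x}$ is feasible). Then there exist nonnegative reals $(\alpha_\infty, \alpha_0, \alpha_1, \ldots)$ with $\alpha_\infty + \sum_{n \geq 0} \alpha_n = 1$, $\alpha_\infty g_\infty(\hat{x}) = 0$, $\alpha_n g_n(\hat{x}) = 0$ for all $n \geq 1$, and the function $x \mapsto \alpha_\infty g_\infty(x) + \sum_{n \geq 0} \alpha_n g_n(x)$ attains a global minimum on $C$ at $\hat{x}$. -/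

import Mathlib

open Filter Topology BoundedContinuousFunction

noncomputable section Stmt15Aux

/-- The standard basis sequence in `ℕ →ᵇ ℝ`. -/
def sbasis (n : ℕ) : BoundedContinuousFunction ℕ ℝ :=
  BoundedContinuousFunction.ofNormedAddCommGroupDiscrete
    (fun m => if m = n then (1:ℝ) else 0) 1 (by
      intro m; by_cases h : m = n <;> simp [h])

@[simp] lemma sbasis_apply (n m : ℕ) : sbasis n m = if m = n then (1:ℝ) else 0 := rfl

/-- The constant one sequence. -/
def sone : BoundedContinuousFunction ℕ ℝ := BoundedContinuousFunction.const ℕ (1:ℝ)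

@[simp] lemma sone_apply (m : ℕ) : sone m = 1 := rfl

lemma sbasis_nonneg (n m : ℕ) : 0 ≤ sbasis n m := by
  by_cases h : m = n <;> simp [h]

variable (φ : BoundedContinuousFunction ℕ ℝ →L[ℝ] ℝ)

lemma alpha_sum_range_le
    (hpos : ∀ v : BoundedContinuousFunction ℕ ℝ, (∀ n, 0 ≤ v n) → 0 ≤ φ v) :
    ∀ N, ∑ i ∈ Finset.range N, φ (sbasis i) ≤ φ sone := by
    intro N
    have h1 : ∑ i ∈ Finset.range N, φ (sbasis i) = φ (∑ i ∈ Finset.range N, sbasis i) :=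
      (map_sum φ sbasis (Finset.range N)).symm
    have h2 : 0 ≤ φ (sone - ∑ i ∈ Finset.range N, sbasis i) := by
      apply hpos
      intro m
      have : ((∑ i ∈ Finset.range N, sbasis i : BoundedContinuousFunction ℕ ℝ)) m
          = ∑ i ∈ Finset.range N, (if m = i then (1:ℝ) else 0) := by
        rw [BoundedContinuousFunction.coe_sum, Finset.sum_apply]
        simp
      rw [BoundedContinuousFunction.coe_sub]
      simp only [Pi.sub_apply, sone_apply, this, Finset.sum_ite_eq]
      by_cases h : m ∈ Finset.range N <;> simp [h]
    rw [map_sub] at h2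
    linarith [h1 ▸ h2]

lemma alpha_summable (hpos : ∀ v : BoundedContinuousFunction ℕ ℝ, (∀ n, 0 ≤ v n) → 0 ≤ φ v) :
    Summable (fun n => φ (sbasis n)) :=
  summable_of_sum_range_le (fun n => hpos _ (sbasis_nonneg n)) (alpha_sum_range_le φ hpos)

lemma phi_decomp (hpos : ∀ v : BoundedContinuousFunction ℕ ℝ, (∀ n, 0 ≤ v n) → 0 ≤ φ v)
    (s : BoundedContinuousFunction ℕ ℝ) (L : ℝ)
    (hsL : Tendsto (fun n => s n) atTop (𝓝 L)) :
    φ s = L * φ sone + ∑' n, (s n - L) * φ (sbasis n) := by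
  set α := fun n => φ (sbasis n) with hα
  have hαnn : ∀ n, 0 ≤ α n := fun n => hpos _ (sbasis_nonneg n)
  have hαs : Summable α := alpha_summable φ hpos
  have hsum : Summable (fun n => (s n - L) * α n) := by
    apply Summable.of_norm_bounded (g := fun n => (‖s‖ + |L|) * α n) (hαs.mul_left _)
    intro n
    rw [Real.norm_eq_abs, abs_mul, abs_of_nonneg (hαnn n)]
    apply mul_le_mul_of_nonneg_right _ (hαnn n)
    calc |s n - L| ≤ |s n| + |L| := abs_sub _ _
    _ ≤ ‖s‖ + |L| := by
        have := s.norm_coe_le_norm n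
        rw [Real.norm_eq_abs] at this
        linarith
  set P : ℕ → BoundedContinuousFunction ℕ ℝ :=
    fun N => L • sone + ∑ n ∈ Finset.range N, (s n - L) • sbasis n with hP
  have hPapp : ∀ N m, P N m = L + (if m ∈ Finset.range N then s m - L else 0) := by
    intro N m
    simp only [hP, BoundedContinuousFunction.coe_add, BoundedContinuousFunction.coe_smul,
      BoundedContinuousFunction.coe_sum, Pi.add_apply, Finset.sum_apply]
    simp [smul_eq_mul, Finset.sum_ite_eq, mul_ite]
  have hPlim : Tendsto P atTop (𝓝 s) := by
    rw [Metric.tendsto_atTop]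
    intro ε hε
    obtain ⟨N0, hN0⟩ := (Metric.tendsto_atTop.1 hsL) (ε/2) (by linarith)
    refine ⟨N0, fun N hN => ?_⟩
    have hb : ∀ m, ‖(P N - s) m‖ ≤ ε/2 := by
      intro m
      rw [BoundedContinuousFunction.coe_sub, Pi.sub_apply, hPapp]
      by_cases hm : m ∈ Finset.range N
      · simp only [hm, if_true]
        have h0 : L + (s m - L) - s m = (0:ℝ) := by ring
        rw [h0, norm_zero]; linarith
      · simp only [hm, if_false, add_zero]
        have hmN : N ≤ m := by simpa [Finset.mem_range, not_lt] using hm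
        have := hN0 m (le_trans hN hmN)
        rw [Real.dist_eq] at this
        rw [Real.norm_eq_abs, abs_sub_comm]
        linarith
    have hd : dist (P N) s ≤ ε/2 := by
      rw [dist_eq_norm]
      exact (BoundedContinuousFunction.norm_le (by linarith)).2 hb
    linarith
  have h1 : Tendsto (fun N => φ (P N)) atTop (𝓝 (φ s)) :=
    (φ.continuous.tendsto s).comp hPlim
  have h2 : ∀ N, φ (P N) = L * φ sone + ∑ n ∈ Finset.range N, (s n - L) * α n := by
    intro N
    simp only [hP, map_add, map_smul, map_sum, smul_eq_mul, hα]
  have h3 : Tendsto (fun N => φ (P N)) atTop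
      (𝓝 (L * φ sone + ∑' n, (s n - L) * α n)) := by
    simp only [h2]
    exact tendsto_const_nhds.add hsum.hasSum.tendsto_sum_nat
  exact tendsto_nhds_unique h1 h3

end Stmt15Aux

theorem stmt_15 {X : Type*} [AddCommGroup X] [Module ℝ X]
    (C : Set X) (hC : C.Nonempty) (hCconv : Convex ℝ C)
    (g : ℕ → X → ℝ) (ginf : X → ℝ)
    (hconv : ∀ n, ConvexOn ℝ C (g n))
    (hlim : ∀ x ∈ C, Tendsto (fun n => g n x) atTop (𝓝 (ginf x)))
    (xh : X) (hxhC : xh ∈ C) (hfeas : ∀ n ≥ 1, g n xh ≤ 0)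
    (hmin : ∀ x ∈ C, (∀ n ≥ 1, g n x ≤ 0) → g 0 xh ≤ g 0 x) :
    ∃ (αinf : ℝ) (α : ℕ → ℝ), 0 ≤ αinf ∧ (∀ n, 0 ≤ α n) ∧ Summable α ∧
      αinf + ∑' n, α n = 1 ∧
      αinf * ginf xh = 0 ∧ (∀ n ≥ 1, α n * g n xh = 0) ∧
      ∀ x ∈ C, αinf * ginf xh + ∑' n, α n * g n xh ≤
        αinf * ginf x + ∑' n, α n * g n x := by
    classical
  set T : X → ℕ → ℝ := fun x n => if n = 0 then g 0 x - g 0 xh else g n x with hT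
  have hbdd : ∀ x ∈ C, ∃ B : ℝ, ∀ n, ‖T x n‖ ≤ B := by
    intro x hx
    obtain ⟨M, hM⟩ : BddAbove (Set.range fun n => |g n x|) := ((hlim x hx).abs).bddAbove_range
    refine ⟨max M ‖g 0 x - g 0 xh‖, fun n => ?_⟩
    by_cases h : n = 0
    · simp only [hT, h, if_true]
      exact le_max_right _ _
    · simp only [hT, h, if_false, Real.norm_eq_abs]
      exact le_trans (hM ⟨n, rfl⟩) (le_max_left _ _)
  set U : Set (BoundedContinuousFunction ℕ ℝ) := {v | ∃ ε > 0, ∀ n, v n ≤ -ε} with hUdef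
  set A : Set (BoundedContinuousFunction ℕ ℝ) := {v | ∃ x ∈ C, ∀ n, T x n ≤ v n} with hAdef
  have hUopen : IsOpen U := by
    rw [Metric.isOpen_iff]
    rintro v ⟨ε, hε, hv⟩
    refine ⟨ε/2, by linarith, fun w hw => ?_⟩
    rw [Metric.mem_ball] at hw
    refine ⟨ε/2, by linarith, fun n => ?_⟩
    have h1 : dist (w n) (v n) ≤ dist w v := BoundedContinuousFunction.dist_coe_le_dist n
    rw [Real.dist_eq] at h1
    have h2 := abs_le.1 (le_of_lt (lt_of_le_of_lt h1 hw))
    linarith [hv n, h2.1, h2.2]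
  have hUconv : Convex ℝ U := by
    rintro v ⟨εv, hεv, hvle⟩ w ⟨εw, hεw, hwle⟩ a b ha hb hab
    refine ⟨min εv εw, lt_min hεv hεw, fun n => ?_⟩
    have h1 : a * v n ≤ a * (-(min εv εw)) := by
      apply mul_le_mul_of_nonneg_left _ ha
      have := min_le_left εv εw
      linarith [hvle n]
    have h2 : b * w n ≤ b * (-(min εv εw)) := by
      apply mul_le_mul_of_nonneg_left _ hb
      have := min_le_right εv εw
      linarith [hwle n]
    have h3 : (a • v + b • w) n = a * v n + b * w n := by
      simp [BoundedContinuousFunction.coe_add, BoundedContinuousFunction.coe_smul, smul_eq_mul]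
    rw [h3]
    have h4 : a * -(min εv εw) + b * -(min εv εw) = -(min εv εw) := by
      rw [← add_mul, hab, one_mul]
    linarith
  have hAconv : Convex ℝ A := by
    rintro v ⟨x1, hx1, hv⟩ w ⟨x2, hx2, hw⟩ a b ha hb hab
    refine ⟨a • x1 + b • x2, hCconv hx1 hx2 ha hb hab, fun n => ?_⟩
    have h3 : (a • v + b • w) n = a * v n + b * w n := by
      simp [BoundedContinuousFunction.coe_add, BoundedContinuousFunction.coe_smul, smul_eq_mul]
    rw [h3]
    have hv' := hv n
    have hw' := hw n
    by_cases h : n = 0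
    · subst h
      simp only [hT, if_true] at hv' hw' ⊢
      have hc0 := (hconv 0).2 hx1 hx2 ha hb hab
      simp only [smul_eq_mul] at hc0
      have h4 : a * g 0 xh + b * g 0 xh = g 0 xh := by rw [← add_mul, hab, one_mul]
      linarith [mul_le_mul_of_nonneg_left hv' ha, mul_le_mul_of_nonneg_left hw' hb, h4]
    · simp only [hT, h, if_false] at hv' hw' ⊢
      have hcn := (hconv n).2 hx1 hx2 ha hb hab
      simp only [smul_eq_mul] at hcn
      linarith [mul_le_mul_of_nonneg_left hv' ha, mul_le_mul_of_nonneg_left hw' hb]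
  have hdisj : Disjoint U A := by
    rw [Set.disjoint_left]
    rintro v ⟨ε, hε, hvle⟩ ⟨x, hx, hTv⟩
    have hfeasx : ∀ n ≥ 1, g n x ≤ 0 := by
      intro n hn
      have h1 := le_trans (hTv n) (hvle n)
      simp only [hT, Nat.one_le_iff_ne_zero.1 hn, if_false] at h1
      linarith
    have h2 := hmin x hx hfeasx
    have h0 := le_trans (hTv 0) (hvle 0)
    simp only [hT, if_true] at h0
    linarith
  obtain ⟨φ, u, hφU, hφA⟩ := geometric_hahn_banach_open hUconv hUopen hAconv hdisj
  have h0A : (0 : BoundedContinuousFunction ℕ ℝ) ∈ A := by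
    refine ⟨xh, hxhC, fun n => ?_⟩
    by_cases h : n = 0
    · simp [hT, h]
    · simp only [hT, h, if_false, BoundedContinuousFunction.coe_zero, Pi.zero_apply]
      exact hfeas n (Nat.one_le_iff_ne_zero.2 h)
  have huneg : u ≤ 0 := by simpa using hφA 0 h0A
  have honeU : -(sone) ∈ U := ⟨1, one_pos, fun n => by simp⟩
  have hMpos : 0 < φ sone := by
    have := hφU _ honeU
    rw [map_neg] at this
    linarith
  have hu0 : 0 ≤ u := by
    by_contra hcon
    push_neg at hcon
    set t : ℝ := -u / (2 * φ sone) with htdef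
    have ht : 0 < t := div_pos (by linarith) (by linarith)
    have hmem : t • (-(sone)) ∈ U := by
      refine ⟨t, ht, fun n => ?_⟩
      simp [BoundedContinuousFunction.coe_smul, smul_eq_mul]
    have hlt := hφU _ hmem
    rw [map_smul, map_neg, smul_eq_mul] at hlt
    have htval : t * φ sone = -u/2 := by
      rw [htdef]; field_simp
    nlinarith
  have hu : u = 0 := le_antisymm huneg hu0
  have hpos : ∀ v : BoundedContinuousFunction ℕ ℝ, (∀ n, 0 ≤ v n) → 0 ≤ φ v := by
    intro v hv
    by_contra hcon
    push_neg at hcon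
    set ε : ℝ := -φ v / (2 * φ sone) with hεdef
    have hεpos : 0 < ε := div_pos (by linarith) (by linarith)
    have hmem : -v - ε • sone ∈ U := by
      refine ⟨ε, hεpos, fun n => ?_⟩
      have he : (-v - ε • sone) n = -(v n) - ε := by
        simp [BoundedContinuousFunction.coe_sub, BoundedContinuousFunction.coe_smul,
          BoundedContinuousFunction.coe_neg, smul_eq_mul]
      rw [he]
      linarith [hv n]
    have h1 := hφU _ hmem
    rw [map_sub, map_neg, map_smul, smul_eq_mul, hu] at h1
    have hεval : ε * φ sone = -φ v / 2 := by
      rw [hεdef]; field_simp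
    nlinarith
  set αr : ℕ → ℝ := fun n => φ (sbasis n) with hαr
  have hαnn : ∀ n, 0 ≤ αr n := fun n => hpos _ (sbasis_nonneg n)
  have hαsum : Summable αr := alpha_summable φ hpos
  have htsum_le : ∑' n, αr n ≤ φ sone :=
    Real.tsum_le_of_sum_range_le hαnn (alpha_sum_range_le φ hpos)
  set β : ℝ := φ sone - ∑' n, αr n with hβ
  have hβnn : 0 ≤ β := by rw [hβ]; linarith
  have hgsum : ∀ x ∈ C, Summable (fun n => αr n * g n x) := by
    intro x hx
    obtain ⟨M, hM⟩ : BddAbove (Set.range fun n => |g n x|) := ((hlim x hx).abs).bddAbove_range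
    apply Summable.of_norm_bounded (g := fun n => M * αr n) (hαsum.mul_left M)
    intro n
    rw [Real.norm_eq_abs, abs_mul, abs_of_nonneg (hαnn n), mul_comm]
    exact mul_le_mul_of_nonneg_right (hM ⟨n, rfl⟩) (hαnn n)
  have hind : Summable (fun n => if n = 0 then αr 0 * g 0 xh else (0:ℝ)) :=
    ⟨_, hasSum_ite_eq 0 _⟩
  have hstar : ∀ x ∈ C, αr 0 * g 0 xh ≤ β * ginf x + ∑' n, αr n * g n x := by
    intro x hx
    obtain ⟨B, hB⟩ := hbdd x hx
    set v : BoundedContinuousFunction ℕ ℝ :=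
      BoundedContinuousFunction.ofNormedAddCommGroupDiscrete (T x) B hB with hvdef
    have hvapp : ∀ n, v n = T x n := fun n => rfl
    have hvA : v ∈ A := ⟨x, hx, fun n => le_of_eq (hvapp n).symm⟩
    have hφv : 0 ≤ φ v := hu ▸ hφA v hvA
    have hvlim : Tendsto (fun n => v n) atTop (𝓝 (ginf x)) := by
      apply (hlim x hx).congr'
      filter_upwards [eventually_ge_atTop 1] with n hn
      simp [hvapp, hT, Nat.one_le_iff_ne_zero.1 hn]
    have hdec := phi_decomp φ hpos v (ginf x) hvlim
    have hsv : Summable (fun n => v n * αr n) := by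
      apply Summable.of_norm_bounded (g := fun n => B * αr n) (hαsum.mul_left B)
      intro n
      rw [Real.norm_eq_abs, abs_mul, abs_of_nonneg (hαnn n)]
      apply mul_le_mul_of_nonneg_right _ (hαnn n)
      have hBn := hB n
      rw [Real.norm_eq_abs] at hBn
      rw [← hvapp n] at hBn
      exact hBn
    have hsplit : ∑' n, (v n - ginf x) * αr n
        = (∑' n, v n * αr n) - ginf x * ∑' n, αr n := by
      have he : (fun n => (v n - ginf x) * αr n)
          = fun n => v n * αr n - ginf x * αr n := funext fun n => by ring
      rw [he, Summable.tsum_sub hsv (hαsum.mul_left _), tsum_mul_left]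
    have hveq : (fun n => v n * αr n)
        = fun n => αr n * g n x - (if n = 0 then αr 0 * g 0 xh else 0) := by
      funext n
      rw [hvapp n]
      by_cases h : n = 0
      · subst h; simp only [hT, if_true]; ring
      · simp only [hT, h, if_false]; ring
    have h2 : ∑' n, v n * αr n = (∑' n, αr n * g n x) - αr 0 * g 0 xh := by
      rw [hveq, Summable.tsum_sub (hgsum x hx) hind, tsum_ite_eq]
    rw [hdec, hsplit, h2] at hφv
    have hβe : β * ginf x = ginf x * φ sone - ginf x * ∑' n, αr n := by rw [hβ]; ring
    linarith
  have hginfxh : ginf xh ≤ 0 :=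
    le_of_tendsto (hlim xh hxhC) (eventually_atTop.2 ⟨1, hfeas⟩)
  set h' : ℕ → ℝ := fun n => if n = 0 then 0 else αr n * g n xh with hh'
  have hh'eq : h' = fun n => αr n * g n xh - (if n = 0 then αr 0 * g 0 xh else 0) := by
    funext n
    by_cases h : n = 0
    · subst h; simp [hh']
    · simp [hh', h]
  have hh'sum : Summable h' := by
    rw [hh'eq]; exact (hgsum xh hxhC).sub hind
  have hh'tsum : ∑' n, h' n = (∑' n, αr n * g n xh) - αr 0 * g 0 xh := by
    rw [hh'eq, Summable.tsum_sub (hgsum xh hxhC) hind, tsum_ite_eq]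
  have hh'np : ∀ n, h' n ≤ 0 := by
    intro n
    by_cases h : n = 0
    · simp [hh', h]
    · simp only [hh', h, if_false]
      exact mul_nonpos_of_nonneg_of_nonpos (hαnn n) (hfeas n (Nat.one_le_iff_ne_zero.2 h))
  have h1 := hstar xh hxhC
  have hA1 : β * ginf xh ≤ 0 := mul_nonpos_of_nonneg_of_nonpos hβnn hginfxh
  have hA2 : ∑' n, h' n ≤ 0 := tsum_nonpos hh'np
  have hcombine : 0 ≤ β * ginf xh + ∑' n, h' n := by rw [hh'tsum]; linarith
  have hβg0 : β * ginf xh = 0 := by linarith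
  have hS0 : ∑' n, h' n = 0 := by linarith
  have hslack : ∀ n, h' n = 0 := by
    intro n
    have hle := Summable.le_tsum hh'sum.neg n (fun j _ => neg_nonneg.2 (hh'np j))
    rw [tsum_neg, hS0, neg_zero] at hle
    linarith [hh'np n]
  have hslack' : ∀ n ≥ 1, αr n * g n xh = 0 := by
    intro n hn
    have := hslack n
    simpa [hh', Nat.one_le_iff_ne_zero.1 hn] using this
  set M : ℝ := φ sone with hMdef
  have htsumxh : ∑' n, αr n * g n xh = αr 0 * g 0 xh := by
    have := hh'tsum
    rw [hS0] at this
    linarith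
  refine ⟨β / M, fun n => αr n / M, div_nonneg hβnn hMpos.le,
    fun n => div_nonneg (hαnn n) hMpos.le, hαsum.div_const M, ?_, ?_, ?_, ?_⟩
  · rw [tsum_div_const, ← add_div, hβ]
    field_simp
    ring
  · have he : β / M * ginf xh = (β * ginf xh) / M := by ring
    rw [he, hβg0, zero_div]
  · intro n hn
    have he : αr n / M * g n xh = (αr n * g n xh) / M := by ring
    rw [he, hslack' n hn, zero_div]
  · intro x hx
    have hdiv : ∀ y : X, ∑' n, (αr n / M) * g n y = (∑' n, αr n * g n y) / M := by
      intro y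
      have he : (fun n => (αr n / M) * g n y) = fun n => (αr n * g n y) / M :=
        funext fun n => by ring
      rw [he, tsum_div_const]
    rw [hdiv x, hdiv xh, htsumxh]
    have hL : β / M * ginf xh = 0 := by
      have he : β / M * ginf xh = (β * ginf xh) / M := by ring
      rw [he, hβg0, zero_div]
    rw [hL, zero_add]
    have hR : β / M * ginf x + (∑' n, αr n * g n x) / M
        = (β * ginf x + ∑' n, αr n * g n x) / M := by ring
    rw [hR]
    exact (div_le_div_iff_of_pos_right hMpos).2 (hstar x hx)
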